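/- Let F : A → A' be an exact functor between abelian categories that is a quotient functor, and let N ⊆ A and N' ⊆ A' be Serre subcategories with F(N) ⊆ N'. Then the induced exact functor F̄ : A/N → A'/N' is also a quotient functor. -/

import Mathlib

open CategoryTheory CategoryTheory.Limits

universe v u v' u' v'' u''

/-- A predicate on the objects of an abelian category is a *Serre class* (determines a Serre
subcategory) if it is closed under isomorphisms, contains the zero objects, and, for every
short exact sequence `0 ⟶ X₁ ⟶ X₂ ⟶ X₃ ⟶ 0`, the middle term satisfies it iff the two outer
terms do (closure under subobjects, quotient objects and extensions). -/
structure IsSerreClass {A : Type u} [Category.{v} A] [Abelian A] (N : A → Prop) : Prop where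
  prop_of_iso : ∀ {X Y : A}, (X ≅ Y) → N X → N Y
  prop_of_isZero : ∀ X : A, IsZero X → N X
  prop_ses : ∀ S : ShortComplex A, S.ShortExact → (N S.X₂ ↔ N S.X₁ ∧ N S.X₃)

/-- The class of morphisms inverted by a functor. -/
def invertedClass {A : Type u} [Category.{v} A] {B : Type u'} [Category.{v'} B]
    (F : A ⥤ B) : MorphismProperty A :=
  fun _ _ f => IsIso (F.map f)

/-- `q : A ⥤ D` realizes `D` as the Gabriel quotient `A/N` of the abelian category `A` by the
Serre subcategory `N`: it is exact, has essential kernel exactly `N`, and is a localization at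
the class of morphisms it inverts (for an exact functor this class consists of the morphisms
whose kernel and cokernel lie in `N`). -/
structure IsQuotientBy {A : Type u} [Category.{v} A] {D : Type u'} [Category.{v'} D]
    (N : A → Prop) (q : A ⥤ D) : Prop where
  preservesFiniteLimits : PreservesFiniteLimits q
  preservesFiniteColimits : PreservesFiniteColimits q
  essKernel : ∀ X : A, IsZero (q.obj X) ↔ N X
  isLocalization : q.IsLocalization (invertedClass q)

/-- An exact functor `F` between abelian categories is a *quotient functor* if the induced
functor from the Gabriel quotient of its source by its essential kernel is an equivalence;
equivalently, `F` realizes its target as the Gabriel quotient by its essential kernel. -/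
def IsQuotientFunctor {A : Type u} [Category.{v} A] {B : Type u'} [Category.{v'} B]
    (F : A ⥤ B) : Prop :=
  IsQuotientBy (fun X => IsZero (F.obj X)) F

section Auxiliary

/-- In a pushout square, if the morphism parallel to `inr` is an isomorphism, so is `inr`. -/
lemma aux_isPushout_isIso_inr {C : Type*} [Category C] {Z X Y P : C}
    {a : Z ⟶ X} {b : Z ⟶ Y} {c : X ⟶ P} {d : Y ⟶ P} (h : IsPushout a b c d) [IsIso a] :
    IsIso d := by
  refine ⟨h.desc (inv a ≫ b) (𝟙 _) (by simp), h.inr_desc _ _ _, ?_⟩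
  apply h.hom_ext
  · rw [h.inl_desc_assoc, Category.comp_id, Category.assoc, ← h.w, IsIso.inv_hom_id_assoc]
  · rw [h.inr_desc_assoc, Category.id_comp, Category.comp_id]

lemma aux_conj {C : Type*} [Category C] {X Y X' Y' : C} (α : X ≅ X') (β : Y ≅ Y')
    {f : X ⟶ Y} {g : X' ⟶ Y'} (h : f ≫ β.hom = α.hom ≫ g) : f = α.hom ≫ g ≫ β.inv := by
  rw [← cancel_mono β.hom, Category.assoc, Category.assoc, Iso.inv_hom_id,
    Category.comp_id, h]

lemma aux_isIso_cokernel_π_of_eq_zero {C : Type*} [Category C] [Abelian C] {X Y : C}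
    (h : X ⟶ Y) (hz : h = 0) : IsIso (cokernel.π h) := by
  subst hz; infer_instance

/-- The class of morphisms inverted by an exact functor from an abelian category admits a
left calculus of fractions. -/
lemma aux_hasLeftCalculus {A : Type u} [Category.{v} A] [Abelian A]
    {D : Type u'} [Category.{v'} D] [Abelian D]
    (q : A ⥤ D) [PreservesFiniteColimits q] :
    (invertedClass q).HasLeftCalculusOfFractions := by
  have hadd : q.Additive := by
    have := preservesBinaryBiproducts_of_preservesBinaryCoproducts q
    exact Functor.additive_of_preservesBinaryBiproducts q
  refine
    { id_mem := fun X => show IsIso (q.map (𝟙 X)) by rw [q.map_id]; infer_instance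
      comp_mem := fun f g hf hg => by
        letI : IsIso (q.map f) := hf
        letI : IsIso (q.map g) := hg
        show IsIso (q.map (f ≫ g))
        rw [q.map_comp]; infer_instance
      exists_leftFraction := ?_
      ext := ?_ }
  · intro X Y φ
    letI : IsIso (q.map φ.s) := φ.hs
    have hpo := (IsPushout.of_hasPushout φ.s φ.f).map q
    have : IsIso (q.map (pushout.inr φ.s φ.f)) := aux_isPushout_isIso_inr hpo
    exact ⟨MorphismProperty.LeftFraction.mk (pushout.inl φ.s φ.f) (pushout.inr φ.s φ.f) this,
      pushout.condition.symm⟩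
  · intro X' X Y f₁ f₂ s hs heq
    letI : IsIso (q.map s) := hs
    have hz : q.map (f₁ - f₂) = 0 := by
      have h0 : s ≫ (f₁ - f₂) = 0 := by rw [Preadditive.comp_sub, heq, sub_self]
      rw [← cancel_epi (q.map s), ← q.map_comp, h0, q.map_zero, comp_zero]
    refine ⟨_, cokernel.π (f₁ - f₂), ?_, ?_⟩
    · show IsIso (q.map (cokernel.π (f₁ - f₂)))
      have h1 : IsIso (cokernel.π (q.map (f₁ - f₂))) := aux_isIso_cokernel_π_of_eq_zero _ hz
      rw [← π_comp_cokernelComparison]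
      infer_instance
    · rw [← sub_eq_zero, ← Preadditive.sub_comp]
      exact cokernel.condition _

/-- Every morphism in the target of a localization functor with left calculus of fractions is,
up to isomorphism, the image of a morphism. -/
lemma aux_arrow_lift {A : Type u} [Category.{v} A] {D : Type u'} [Category.{v'} D]
    (q : A ⥤ D) [q.IsLocalization (invertedClass q)]
    [(invertedClass q).HasLeftCalculusOfFractions] {P Q : D} (g : P ⟶ Q) :
    ∃ (X Y : A) (f : X ⟶ Y) (α : q.obj X ≅ P) (β : q.obj Y ≅ Q),
      q.map f ≫ β.hom = α.hom ≫ g := by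
  have := Localization.essSurj q (invertedClass q)
  obtain ⟨φ, hφ⟩ := Localization.exists_leftFraction q (invertedClass q)
      ((q.objObjPreimageIso P).hom ≫ g ≫ (q.objObjPreimageIso Q).inv)
  letI : IsIso (q.map φ.s) := Localization.inverts q (invertedClass q) _ φ.hs
  refine ⟨_, _, φ.f, q.objObjPreimageIso P,
    (asIso (q.map φ.s)).symm ≪≫ q.objObjPreimageIso Q, ?_⟩
  have h2 := φ.map_comp_map_s q (Localization.inverts q (invertedClass q))
  rw [← hφ] at h2
  simp only [Iso.trans_hom, Iso.symm_hom, asIso_inv, ← h2, Category.assoc,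
    IsIso.hom_inv_id, Category.comp_id, Iso.inv_hom_id, IsIso.hom_inv_id_assoc,
    Iso.inv_hom_id_assoc]

/-- Every short exact sequence in the target of an exact localization functor lifts, up to
isomorphism, to a short exact sequence in the source. -/
lemma aux_ses_lift {A : Type u} [Category.{v} A] [Abelian A]
    {D : Type u'} [Category.{v'} D] [Abelian D]
    (q : A ⥤ D) [PreservesFiniteLimits q] [PreservesFiniteColimits q]
    [q.IsLocalization (invertedClass q)]
    (S : ShortComplex D) (hS : S.ShortExact) :
    ∃ (T : ShortComplex A), T.ShortExact ∧ Nonempty (T.map q ≅ S) := by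
  letI := aux_hasLeftCalculus q
  obtain ⟨X₁, X₂, f₀, α₁, α₂, hcomm⟩ := aux_arrow_lift q S.f
  have hmonoS := hS.mono_f
  have hepiS := hS.epi_g
  have hf₀ : q.map f₀ = α₁.hom ≫ S.f ≫ α₂.inv := aux_conj α₁ α₂ hcomm
  have hmono : Mono (q.map f₀) := by rw [hf₀]; infer_instance
  set u := kernel.lift (cokernel.π f₀) f₀ (cokernel.condition f₀) with hu
  have hu_ι : u ≫ kernel.ι (cokernel.π f₀) = f₀ := kernel.lift_ι _ _ _
  have hepi_u : Epi u := by
    show Epi (Abelian.factorThruImage f₀); infer_instance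
  haveI : Mono (q.map u ≫ q.map (kernel.ι (cokernel.π f₀))) := by
    rw [← q.map_comp, hu_ι]; exact hmono
  have hmono_qu : Mono (q.map u) := mono_of_mono (q.map u) (q.map (kernel.ι (cokernel.π f₀)))
  have hepi_qu : Epi (q.map u) := q.map_epi u
  haveI : IsIso (q.map u) := isIso_of_mono_of_epi _
  refine ⟨ShortComplex.mk (kernel.ι (cokernel.π f₀)) (cokernel.π f₀) (kernel.condition _),
    ⟨ShortComplex.exact_kernel (cokernel.π f₀)⟩, ⟨?_⟩⟩
  -- iso `cokernel S.f ≅ S.X₃`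
  let c₃ : cokernel S.f ≅ S.X₃ :=
    IsColimit.coconePointUniqueUpToIso (cokernelIsCokernel S.f) hS.gIsCokernel
  have hc₃ : cokernel.π S.f ≫ c₃.hom = S.g :=
    IsColimit.comp_coconePointUniqueUpToIso_hom (cokernelIsCokernel S.f) hS.gIsCokernel
      WalkingParallelPair.one
  refine ShortComplex.isoMk ((asIso (q.map u)).symm ≪≫ α₁) α₂
    ((PreservesCokernel.iso q f₀) ≪≫ cokernel.mapIso (q.map f₀) S.f α₁ α₂ hcomm ≪≫ c₃) ?_ ?_
  · dsimp only [ShortComplex.map, Iso.trans_hom, Iso.symm_hom, asIso_inv, cokernel.mapIso_hom]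
    rw [← cancel_epi (q.map u)]
    simp only [Category.assoc, IsIso.hom_inv_id_assoc, ← Functor.map_comp_assoc, hu_ι, hcomm]
  · have hι : q.map (cokernel.π f₀) ≫ (PreservesCokernel.iso q f₀).hom
        = cokernel.π (q.map f₀) := by
      rw [← Iso.eq_comp_inv, PreservesCokernel.iso_inv, π_comp_cokernelComparison]
    dsimp only [ShortComplex.map, Iso.trans_hom, Iso.symm_hom, asIso_inv, cokernel.mapIso,
      cokernel.map]
    simp only [← Category.assoc]
    rw [hι]
    simp only [cokernel.π_desc]
    simp only [Category.assoc, hc₃]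

end Auxiliary

/-- **Quotient functors pass to quotient categories.**
Let `F : A ⥤ A'` be an exact functor between abelian categories which is a quotient functor,
and let `N ⊆ A`, `N' ⊆ A'` be Serre subcategories with `F(N) ⊆ N'`.  Then the induced exact
functor `F̄ : A/N ⥤ A'/N'` (characterized by `qA ⋙ F̄ ≅ F ⋙ qA'`, where `qA`, `qA'` are the
quotient functors) is also a quotient functor. -/
theorem induced_functor_on_quotients_is_quotient_functor
    {A : Type u} [Category.{v} A] [Abelian A]
    {A' : Type u'} [Category.{v'} A'] [Abelian A']
    (F : A ⥤ A') [PreservesFiniteLimits F] [PreservesFiniteColimits F]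
    (hF : IsQuotientFunctor F)
    (N : A → Prop) (N' : A' → Prop) (hN : IsSerreClass N) (hN' : IsSerreClass N')
    (hFN : ∀ X : A, N X → N' (F.obj X))
    {D : Type u} [Category.{v} D] [Abelian D]
    {D' : Type u'} [Category.{v'} D'] [Abelian D']
    (qA : A ⥤ D) (hqA : IsQuotientBy N qA)
    (qA' : A' ⥤ D') (hqA' : IsQuotientBy N' qA')
    (Fbar : D ⥤ D') (e : qA ⋙ Fbar ≅ F ⋙ qA') :
    IsQuotientFunctor Fbar := by
  -- gather the instances
  letI := hqA.preservesFiniteLimits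
  letI := hqA.preservesFiniteColimits
  letI := hqA'.preservesFiniteLimits
  letI := hqA'.preservesFiniteColimits
  letI := hqA.isLocalization
  letI := hqA'.isLocalization
  letI := hF.isLocalization
  letI := aux_hasLeftCalculus qA
  letI := aux_hasLeftCalculus qA'
  letI := aux_hasLeftCalculus F
  -- additivity
  have hqA_add : qA.Additive := by
    have := preservesBinaryBiproducts_of_preservesBinaryCoproducts qA
    exact Functor.additive_of_preservesBinaryBiproducts qA
  have hqA'_add : qA'.Additive := by
    have := preservesBinaryBiproducts_of_preservesBinaryCoproducts qA'
    exact Functor.additive_of_preservesBinaryBiproducts qA'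
  have hF_add : F.Additive := by
    have := preservesBinaryBiproducts_of_preservesBinaryCoproducts F
    exact Functor.additive_of_preservesBinaryBiproducts F
  have hFQ_add : (F ⋙ qA').Additive := inferInstance
  have hQF_add : (qA ⋙ Fbar).Additive := Functor.additive_of_iso e.symm
  letI hFbar_add : Fbar.Additive :=
    (Localization.functor_additive_iff qA (invertedClass qA) Fbar).2 hQF_add
  -- the localization property
  set W₃ : MorphismProperty A := invertedClass (F ⋙ qA') with hW₃def
  have hFQ_loc : (F ⋙ qA').IsLocalization W₃ := by
    refine Functor.IsLocalization.comp F qA' (invertedClass F) (invertedClass qA') W₃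
      (fun _ _ _ hf => hf) (fun X Y f hf => ?_) (fun X Y g hg => ?_)
    · show IsIso (qA'.map (F.map f))
      letI : IsIso (F.map f) := hf
      infer_instance
    · -- any morphism inverted by `qA'` is, up to isomorphism, the image under `F` of a
      -- morphism inverted by `F ⋙ qA'`
      obtain ⟨X', Y', f, α, β, hcomm⟩ := aux_arrow_lift F g
      have hg' : IsIso (qA'.map g) := hg
      have hf : IsIso (qA'.map (F.map f)) := by
        rw [aux_conj α β hcomm, qA'.map_comp, qA'.map_comp]
        infer_instance
      exact ⟨X', Y', f, hf, ⟨Arrow.isoMk α β (by simpa using hcomm.symm)⟩⟩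
  have hQF_loc : (qA ⋙ Fbar).IsLocalization W₃ :=
    Functor.IsLocalization.of_iso W₃ e.symm
  have hW₁₃ : invertedClass qA ≤ W₃ := by
    intro X Y f hf
    letI : IsIso (qA.map f) := hf
    show IsIso ((F ⋙ qA').map f)
    rw [← NatIso.isIso_map_iff e f]
    show IsIso (Fbar.map (qA.map f))
    infer_instance
  have hW₂₃ : invertedClass Fbar = W₃.map qA := by
    ext X Y g
    constructor
    · intro hg
      have hg' : IsIso (Fbar.map g) := hg
      obtain ⟨X', Y', f, α, β, hcomm⟩ := aux_arrow_lift qA g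
      have hf : IsIso (Fbar.map (qA.map f)) := by
        rw [aux_conj α β hcomm, Fbar.map_comp, Fbar.map_comp]
        infer_instance
      have hf3 : W₃ f := by
        show IsIso ((F ⋙ qA').map f)
        rw [← NatIso.isIso_map_iff e f]
        exact hf
      exact ⟨X', Y', f, hf3, ⟨Arrow.isoMk α β (by simpa using hcomm.symm)⟩⟩
    · rintro ⟨X', Y', f, hf, ⟨ar⟩⟩
      have hf' : IsIso (Fbar.map (qA.map f)) := by
        show IsIso ((qA ⋙ Fbar).map f)
        rw [NatIso.isIso_map_iff e f]
        exact hf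
      show IsIso (Fbar.map g)
      have : g = ar.inv.left ≫ qA.map f ≫ ar.hom.right := by
        have := ar.hom.w
        dsimp at this ⊢
        rw [← this]
        simp
      rw [this, Fbar.map_comp, Fbar.map_comp]
      infer_instance
  have hFbar_loc : Fbar.IsLocalization (invertedClass Fbar) :=
    Functor.IsLocalization.of_comp (L₁ := qA) (L₂ := Fbar) (W₁ := invertedClass qA)
      (W₂ := invertedClass Fbar) W₃ hW₁₃ hW₂₃
  -- exactness of `Fbar` : it preserves short exact sequences
  have hses : ∀ S : ShortComplex D, S.ShortExact → (S.map Fbar).ShortExact := by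
    intro S hS
    obtain ⟨T, hT, ⟨ψ⟩⟩ := aux_ses_lift qA S hS
    have h1 : ((T.map F).map qA').ShortExact := ((hT.map_of_exact F).map_of_exact qA')
    have e1 : (T.map qA).map Fbar ≅ S.map Fbar := Fbar.mapShortComplex.mapIso ψ
    have e2 : T.map (qA ⋙ Fbar) ≅ T.map (F ⋙ qA') := ShortComplex.mapNatIso T e
    have e3 : (T.map F).map qA' ≅ S.map Fbar := e2.symm ≪≫ e1
    exact ShortComplex.shortExact_of_iso e3 h1
  have hL : ∀ (S : ShortComplex D), S.ShortExact →
      (S.map Fbar).Exact ∧ Mono (Fbar.map S.f) :=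
    fun S hS => ⟨(hses S hS).exact, (hses S hS).mono_f⟩
  have hC : ∀ (S : ShortComplex D), S.ShortExact →
      (S.map Fbar).Exact ∧ Epi (Fbar.map S.g) :=
    fun S hS => ⟨(hses S hS).exact, (hses S hS).epi_g⟩
  have hPFL : PreservesFiniteLimits Fbar :=
    ((Fbar.preservesFiniteLimits_tfae).out 0 3).1 hL
  have hPFC : PreservesFiniteColimits Fbar :=
    ((Fbar.preservesFiniteColimits_tfae).out 0 3).1 hC
  exact
    { preservesFiniteLimits := hPFL
      preservesFiniteColimits := hPFC
      essKernel := fun X => Iff.rfl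
      isLocalization := hFbar_loc }
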